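/- Let w⁽⁰⁾, ξ₁, …, ξ_n ∈ ℝ^d, real coefficients ρ₁,…,ρ_n with |ρᵢ| ≤ α, and suppose ‖ξᵢ‖₂² ≥ σ²d/2 and |⟨ξᵢ, ξ_{i'}⟩| ≤ 2σ²·√(d·L) for all i ≠ i'. Let w = w⁽⁰⁾ + ∑ᵢ ρᵢ·‖ξᵢ‖₂⁻²·ξᵢ and let ξ̃ = D⁻¹·∑_{k∈N} ξ_k for a set N of size D. Then |⟨w − w⁽⁰⁾, ξ̃⟩ − D⁻¹·∑_{k∈N}ρ_k| ≤ 4n·√(L/d)·α. -/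

import Mathlib

open RealInnerProductSpace

theorem stmt_17 (d n D : ℕ) (hd : 0 < d) (hD : 0 < D)
    (w w0 : EuclideanSpace ℝ (Fin d)) (ξ : Fin n → EuclideanSpace ℝ (Fin d))
    (ρ : Fin n → ℝ) (α σ L : ℝ) (hα : 0 ≤ α) (hσ : 0 < σ) (hL : 0 ≤ L)
    (hρ : ∀ i, |ρ i| ≤ α)
    (hnorm : ∀ i, ‖ξ i‖ ^ 2 ≥ σ ^ 2 * d / 2)
    (hcross : ∀ i i', i ≠ i' → |⟪ξ i, ξ i'⟫| ≤ 2 * σ ^ 2 * Real.sqrt (d * L))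
    (N : Finset (Fin n)) (hN : N.card = D)
    (hw : w = w0 + ∑ i, (ρ i / ‖ξ i‖ ^ 2) • ξ i) :
    |⟪w - w0, (D : ℝ)⁻¹ • ∑ k ∈ N, ξ k⟫ - (D : ℝ)⁻¹ * ∑ k ∈ N, ρ k| ≤
      4 * n * Real.sqrt (L / d) * α := by
  subst hw
  have hd' : (0:ℝ) < d := by exact_mod_cast hd
  have hD' : (0:ℝ) < D := by exact_mod_cast hD
  have hnormpos : ∀ i, (0:ℝ) < ‖ξ i‖ ^ 2 := fun i =>
    lt_of_lt_of_le (by positivity) (hnorm i)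
  set c := 4 * Real.sqrt (L / d) * α with hc
  have hcnn : 0 ≤ c := by positivity
  have hs : Real.sqrt ((d:ℝ) * L) = Real.sqrt (L / d) * d := by
    rw [show (d:ℝ)*L = (L/d) * d^2 by field_simp,
      Real.sqrt_mul (by positivity), Real.sqrt_sq hd'.le]
  have hterm : ∀ i k : Fin n, i ≠ k → |(ρ i / ‖ξ i‖ ^ 2) * ⟪ξ i, ξ k⟫| ≤ c := by
    intro i k hik
    have h1 : |ρ i / ‖ξ i‖ ^ 2 * ⟪ξ i, ξ k⟫| = |ρ i| * |⟪ξ i, ξ k⟫| / ‖ξ i‖ ^ 2 := by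
      rw [abs_mul, abs_div, abs_of_pos (hnormpos i)]; ring
    rw [h1]
    calc |ρ i| * |⟪ξ i, ξ k⟫| / ‖ξ i‖ ^ 2
        ≤ α * (2 * σ ^ 2 * Real.sqrt ((d:ℝ) * L)) / (σ ^ 2 * d / 2) := by
          exact div_le_div₀ (by positivity)
            (mul_le_mul (hρ i) (hcross i k hik) (abs_nonneg _) hα)
            (by positivity) (hnorm i)
      _ = c := by rw [hs, hc]; field_simp; ring
  have hsub : (w0 + ∑ i, (ρ i / ‖ξ i‖ ^ 2) • ξ i) - w0 = ∑ i, (ρ i / ‖ξ i‖ ^ 2) • ξ i := by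
    abel
  rw [hsub]
  have key : ⟪∑ i, (ρ i / ‖ξ i‖ ^ 2) • ξ i, (D:ℝ)⁻¹ • ∑ k ∈ N, ξ k⟫
      = (D:ℝ)⁻¹ * ∑ k ∈ N, ∑ i, (ρ i / ‖ξ i‖ ^ 2) * ⟪ξ i, ξ k⟫ := by
    rw [inner_smul_right, inner_sum]
    congr 1
    refine Finset.sum_congr rfl fun k _ => ?_
    rw [sum_inner]
    exact Finset.sum_congr rfl fun i _ => real_inner_smul_left _ _ _
  rw [key]
  have hdiag : ∀ k : Fin n, ∑ i, (ρ i / ‖ξ i‖ ^ 2) * ⟪ξ i, ξ k⟫ - ρ k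
      = ∑ i ∈ Finset.univ.erase k, (ρ i / ‖ξ i‖ ^ 2) * ⟪ξ i, ξ k⟫ := by
    intro k
    have hk : (ρ k / ‖ξ k‖ ^ 2) * ⟪ξ k, ξ k⟫ = ρ k := by
      rw [real_inner_self_eq_norm_sq]
      exact div_mul_cancel₀ _ (hnormpos k).ne'
    rw [← Finset.sum_erase_add _ _ (Finset.mem_univ k), hk]
    ring
  have hbound : ∀ k : Fin n, |∑ i, (ρ i / ‖ξ i‖ ^ 2) * ⟪ξ i, ξ k⟫ - ρ k| ≤ n * c := by
    intro k
    rw [hdiag k]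
    calc |∑ i ∈ Finset.univ.erase k, (ρ i / ‖ξ i‖ ^ 2) * ⟪ξ i, ξ k⟫|
        ≤ ∑ i ∈ Finset.univ.erase k, |(ρ i / ‖ξ i‖ ^ 2) * ⟪ξ i, ξ k⟫| :=
          Finset.abs_sum_le_sum_abs _ _
      _ ≤ ∑ i ∈ Finset.univ.erase k, c :=
          Finset.sum_le_sum fun i hi => hterm i k (Finset.ne_of_mem_erase hi)
      _ = (Finset.univ.erase k).card * c := by rw [Finset.sum_const, nsmul_eq_mul]
      _ ≤ n * c := by
          apply mul_le_mul_of_nonneg_right _ hcnn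
          exact_mod_cast Finset.card_le_card (Finset.erase_subset _ _) |>.trans
            (by simp)
  calc |(D:ℝ)⁻¹ * ∑ k ∈ N, ∑ i, (ρ i / ‖ξ i‖ ^ 2) * ⟪ξ i, ξ k⟫ - (D:ℝ)⁻¹ * ∑ k ∈ N, ρ k|
      = (D:ℝ)⁻¹ * |∑ k ∈ N, (∑ i, (ρ i / ‖ξ i‖ ^ 2) * ⟪ξ i, ξ k⟫ - ρ k)| := by
        rw [Finset.sum_sub_distrib, ← mul_sub, abs_mul, abs_of_pos (by positivity)]
    _ ≤ (D:ℝ)⁻¹ * ∑ k ∈ N, |∑ i, (ρ i / ‖ξ i‖ ^ 2) * ⟪ξ i, ξ k⟫ - ρ k| := by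
        exact mul_le_mul_of_nonneg_left (Finset.abs_sum_le_sum_abs _ _) (by positivity)
    _ ≤ (D:ℝ)⁻¹ * ∑ k ∈ N, (n * c) :=
        mul_le_mul_of_nonneg_left (Finset.sum_le_sum fun k _ => hbound k) (by positivity)
    _ = (D:ℝ)⁻¹ * (N.card * (n * c)) := by rw [Finset.sum_const, nsmul_eq_mul]
    _ = n * c := by rw [hN]; field_simp
    _ = 4 * n * Real.sqrt (L / d) * α := by rw [hc]; ring
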